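/- Let U : D → ℂ be C² on an open set D ⊂ ℂ with Im z ≠ 0, satisfying ∂U/∂z̄ = conj(U)/(z - z̄). Define ξ = ∂U/∂z + U/(z - z̄). Then ∂ξ/∂z̄ = 0 on D. -/

import Mathlib

/-- The Wirtinger derivative `∂U/∂z = (1/2)(∂_x - i ∂_y) U`. -/
noncomputable def wirtingerZ (U : ℂ → ℂ) (z : ℂ) : ℂ :=
  (1 / 2 : ℂ) * (fderiv ℝ U z 1 - Complex.I * fderiv ℝ U z Complex.I)

/-- The Wirtinger derivative `∂U/∂z̄ = (1/2)(∂_x + i ∂_y) U`. -/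
noncomputable def wirtingerZbar (U : ℂ → ℂ) (z : ℂ) : ℂ :=
  (1 / 2 : ℂ) * (fderiv ℝ U z 1 + Complex.I * fderiv ℝ U z Complex.I)

open Complex ContinuousLinearMap in
private lemma hasFDerivAt_div_c {a s : ℂ → ℂ} {A S : ℂ →L[ℝ] ℂ} {z : ℂ}
    (ha : HasFDerivAt a A z) (hs : HasFDerivAt s S z) (h0 : s z ≠ 0) :
    HasFDerivAt (fun y => a y / s y) ((s z)⁻¹ • A - (a z / s z ^ 2) • S) z := by
  have hinv := (hasFDerivAt_inv' (𝕜 := ℝ) h0).comp z hs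
  have h := ha.mul' hinv
  have hfun : (fun y => a y / s y) = fun y => a y * (Inv.inv ∘ s) y := by
    funext y; simp [Function.comp, div_eq_mul_inv]
  have hclm : a z • ((-(mulLeftRight ℝ ℂ) (s z)⁻¹ (s z)⁻¹).comp S) + A.smulRight ((Inv.inv ∘ s) z)
      = (s z)⁻¹ • A - (a z / s z ^ 2) • S := by
    ext v
    simp only [ContinuousLinearMap.sub_apply, ContinuousLinearMap.smul_apply,
      ContinuousLinearMap.add_apply, ContinuousLinearMap.comp_apply,
      ContinuousLinearMap.smulRight_apply, ContinuousLinearMap.neg_apply,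
      ContinuousLinearMap.mulLeftRight_apply, smul_eq_mul, Function.comp]
    field_simp
    ring
  rw [hfun]
  exact hclm ▸ h

/-- If `U` is `C²` on an open set `D` with `Im z ≠ 0` and solves
`∂U/∂z̄ = conj(U)/(z - z̄)`, then `ξ = U_z + U/(z - z̄)` satisfies
`∂ξ/∂z̄ = 0` on `D`. -/
theorem stmt11 (D : Set ℂ) (hD : IsOpen D) (U : ℂ → ℂ)
    (hz : ∀ z ∈ D, z.im ≠ 0)
    (hU : ContDiffOn ℝ 2 U D)
    (hpde : ∀ z ∈ D,
      wirtingerZbar U z = (starRingEnd ℂ) (U z) / (z - (starRingEnd ℂ) z)) :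
    let ξ : ℂ → ℂ := fun z => wirtingerZ U z + U z / (z - (starRingEnd ℂ) z)
    ∀ z ∈ D, wirtingerZbar ξ z = 0 := by
  intro ξ z₀ hz₀
  -- basic notation
  set w : ℂ := z₀ - (starRingEnd ℂ) z₀ with hw_def
  have hw : w ≠ 0 := by
    rw [hw_def, Complex.sub_conj]
    simp only [ne_eq, mul_eq_zero, Complex.I_ne_zero, or_false]
    intro h
    have h2 : (2:ℝ) * z₀.im = 0 := by exact_mod_cast h
    exact hz z₀ hz₀ (by linarith)
  -- conjugation as a CLM
  set C : ℂ →L[ℝ] ℂ := Complex.conjCLE.toContinuousLinearMap with hC_def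
  have hCfun : (fun y : ℂ => (starRingEnd ℂ) y) = ⇑C := by
    funext y; simp [hC_def]
  have hCat : ∀ z : ℂ, HasFDerivAt (fun y : ℂ => (starRingEnd ℂ) y) C z := by
    intro z; rw [hCfun]; exact C.hasFDerivAt
  -- derivative of s z = z - conj z
  set S : ℂ →L[ℝ] ℂ := ContinuousLinearMap.id ℝ ℂ - C with hS_def
  have hSat : ∀ z : ℂ, HasFDerivAt (fun y : ℂ => y - (starRingEnd ℂ) y) S z := by
    intro z; exact (hasFDerivAt_id z).sub (hCat z)
  have hs0 : ∀ z ∈ D, z - (starRingEnd ℂ) z ≠ 0 := by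
    intro z hzD h
    rw [Complex.sub_conj] at h
    simp only [mul_eq_zero, Complex.I_ne_zero, or_false] at h
    have h2 : (2:ℝ) * z.im = 0 := by exact_mod_cast h
    exact hz z hzD (by linarith)
  -- U is differentiable on D with derivative fderiv
  have hUat : ∀ z ∈ D, HasFDerivAt U (fderiv ℝ U z) z := by
    intro z hzD
    exact (((hU.contDiffAt (hD.mem_nhds hzD)).differentiableAt two_ne_zero)).hasFDerivAt
  -- fderiv U is C¹ on D, hence differentiable at z₀
  have hf1 : ContDiffOn ℝ 1 (fderiv ℝ U) D := hU.fderiv_of_isOpen hD le_rfl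
  set F : ℂ →L[ℝ] ℂ →L[ℝ] ℂ := fderiv ℝ (fderiv ℝ U) z₀ with hF_def
  have hFat : HasFDerivAt (fderiv ℝ U) F z₀ :=
    ((hf1.contDiffAt (hD.mem_nhds hz₀)).differentiableAt one_ne_zero).hasFDerivAt
  -- symmetry of second derivative
  have hsym : F 1 Complex.I = F Complex.I 1 :=
    ((hU.contDiffAt (hD.mem_nhds hz₀)).isSymmSndFDerivAt (by rw [minSmoothness_of_isRCLikeNormedField])) 1 Complex.I
  -- evaluation maps
  have hev : ∀ v : ℂ, HasFDerivAt (fun z => fderiv ℝ U z v)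
      ((ContinuousLinearMap.apply ℝ ℂ v).comp F) z₀ := by
    intro v
    exact ((ContinuousLinearMap.apply ℝ ℂ v).hasFDerivAt).comp z₀ hFat
  -- derivative of wirtingerZ U
  set LA : ℂ →L[ℝ] ℂ := (1/2 : ℂ) • (((ContinuousLinearMap.apply ℝ ℂ 1).comp F)
      - Complex.I • ((ContinuousLinearMap.apply ℝ ℂ Complex.I).comp F)) with hLA_def
  have hA : HasFDerivAt (fun z => wirtingerZ U z) LA z₀ := by
    unfold wirtingerZ
    exact (((hev 1).sub ((hev Complex.I).const_mul Complex.I)).const_mul (1/2 : ℂ))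
  -- derivative of wirtingerZbar U
  set LB : ℂ →L[ℝ] ℂ := (1/2 : ℂ) • (((ContinuousLinearMap.apply ℝ ℂ 1).comp F)
      + Complex.I • ((ContinuousLinearMap.apply ℝ ℂ Complex.I).comp F)) with hLB_def
  have hB : HasFDerivAt (fun z => wirtingerZbar U z) LB z₀ := by
    unfold wirtingerZbar
    exact (((hev 1).add ((hev Complex.I).const_mul Complex.I)).const_mul (1/2 : ℂ))
  -- derivative of conj U
  have hcU : HasFDerivAt (fun z => (starRingEnd ℂ) (U z)) (C.comp (fderiv ℝ U z₀)) z₀ := by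
    exact (hCat (U z₀)).comp z₀ (hUat z₀ hz₀)
  -- derivative of conj U / s
  have hq2 := hasFDerivAt_div_c hcU (hSat z₀) (hs0 z₀ hz₀)
  -- wirtingerZbar U = conj U / s near z₀, so the derivatives agree
  have heq : (fun z => wirtingerZbar U z)
      =ᶠ[nhds z₀] (fun z => (starRingEnd ℂ) (U z) / (z - (starRingEnd ℂ) z)) := by
    filter_upwards [hD.mem_nhds hz₀] with z hzD using hpde z hzD
  have hLBeq : LB = (z₀ - (starRingEnd ℂ) z₀)⁻¹ • (C.comp (fderiv ℝ U z₀))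
      - ((starRingEnd ℂ) (U z₀) / (z₀ - (starRingEnd ℂ) z₀) ^ 2) • S := by
    rw [← hB.fderiv, ← hq2.fderiv]
    exact heq.fderiv_eq
  -- derivative of ξ
  have hq := hasFDerivAt_div_c (hUat z₀ hz₀) (hSat z₀) (hs0 z₀ hz₀)
  have hXi : HasFDerivAt ξ (LA + ((z₀ - (starRingEnd ℂ) z₀)⁻¹ • (fderiv ℝ U z₀)
      - (U z₀ / (z₀ - (starRingEnd ℂ) z₀) ^ 2) • S)) z₀ := hA.add hq
  have hLB1 := ContinuousLinearMap.ext_iff.mp hLBeq 1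
  have hLBI := ContinuousLinearMap.ext_iff.mp hLBeq Complex.I
  have hpde0 := hpde z₀ hz₀
  unfold wirtingerZbar at hpde0 ⊢
  rw [hXi.fderiv]
  simp only [hLA_def, hLB_def, hS_def, hC_def, ContinuousLinearMap.add_apply,
    ContinuousLinearMap.sub_apply, ContinuousLinearMap.smul_apply,
    ContinuousLinearMap.comp_apply, ContinuousLinearMap.apply_apply,
    ContinuousLinearMap.id_apply, ContinuousLinearEquiv.coe_coe,
    Complex.conjCLE_apply, smul_eq_mul, map_one, Complex.conj_I] at hLB1 hLBI ⊢
  have hcpde : (1:ℂ)/2 * ((starRingEnd ℂ) (fderiv ℝ U z₀ 1)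
      - Complex.I * (starRingEnd ℂ) (fderiv ℝ U z₀ Complex.I)) = -(U z₀ / w) := by
    have h := congrArg (starRingEnd ℂ) hpde0
    simp only [map_mul, map_add, map_div₀, map_sub, map_one, map_ofNat,
      Complex.conj_I, Complex.conj_conj] at h
    have hneg : (starRingEnd ℂ) z₀ - z₀ = -w := by rw [hw_def]; ring
    rw [hneg, div_neg] at h
    linear_combination h
  rw [← hw_def] at hLB1 hLBI hpde0 ⊢
  clear_value w
  linear_combination (1/2 : ℂ) * hLB1 - (Complex.I/2) * hLBI + (1/w) * hpde0
    + (1/w) * hcpde - (Complex.I/2) * hsym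
    + (((starRingEnd ℂ) (U z₀) - U z₀)/w^2) * Complex.I_sq
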